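/- Strict positivity of the total-variation gap under covariate shift: let μ be a probability measure on X, let ω : X → [0,∞) be measurable with ∫ ω dμ = 1, let η : X → [0,1] be measurable (the conditional probability of label +1 given the feature), and let g : X → {0,1} be measurable (the indicator of h(x) = +1). Write X₊ := {x : ω(x) ≥ 1} and X₋ := {x : ω(x) < 1}. Assume: (A1) |∫_{X₊} η·(1−ω) dμ| ≥ |∫_{X₋} η·(1−ω) dμ|; (A2) |∫_{X₊} g·(1−ω) dμ| ≥ |∫_{X₋} g·(1−ω) dμ|; (A3) ∫ (η − g)·(ω − 1) dμ > 0 (i.e., the covariance under μ of η(X) − g(X) with ω(X) is strictly positive). Then |∫ η·(1−ω) dμ| − |∫ g·(1−ω) dμ| > 0. (The first absolute value equals the total variation distance between the label marginals of the source and covariate-shift induced distributions, and the second equals that between the prediction marginals; combined with the general lower bound this shows max{err_{D_S}(h), err_{D(h)}(h)} is strictly positive.) -/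

import Mathlib

open MeasureTheory

/-- Strict positivity of the total-variation gap under covariate shift: with source
feature distribution `μ`, importance weight `ω ≥ 0` with `∫ ω dμ = 1`, conditional
positive-label probability `η : X → [0,1]`, and `g : X → {0,1}` the indicator of
`h(x) = +1`, if (A1) the reweighting mass change on labels is dominated by the region
`X₊ = {ω ≥ 1}`, (A2) likewise for predictions, and (A3) the covariance of `η − g` with
`ω` under `μ` is strictly positive, then
`|∫ η·(1−ω) dμ| − |∫ g·(1−ω) dμ| > 0`. -/
theorem tv_gap_strictly_positive_covariate_shift
    {X : Type*} [MeasurableSpace X]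
    (μ : Measure X) [IsProbabilityMeasure μ]
    (ω : X → ℝ) (hω_meas : Measurable ω) (hω_nonneg : ∀ x, 0 ≤ ω x)
    (hω_int : ∫ x, ω x ∂μ = 1)
    (η : X → ℝ) (hη_meas : Measurable η) (hη01 : ∀ x, η x ∈ Set.Icc (0 : ℝ) 1)
    (g : X → ℝ) (hg_meas : Measurable g) (hg01 : ∀ x, g x = 0 ∨ g x = 1)
    (A1 : |∫ x in {x | ω x < 1}, η x * (1 - ω x) ∂μ| ≤
          |∫ x in {x | 1 ≤ ω x}, η x * (1 - ω x) ∂μ|)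
    (A2 : |∫ x in {x | ω x < 1}, g x * (1 - ω x) ∂μ| ≤
          |∫ x in {x | 1 ≤ ω x}, g x * (1 - ω x) ∂μ|)
    (A3 : 0 < ∫ x, (η x - g x) * (ω x - 1) ∂μ) :
    0 < |∫ x, η x * (1 - ω x) ∂μ| - |∫ x, g x * (1 - ω x) ∂μ| := by
  -- ω is integrable (otherwise its integral would be 0, not 1)
  have hωint : Integrable ω μ := by
    by_contra h
    rw [integral_undef h] at hω_int
    norm_num at hω_int
  have h1ω : Integrable (fun x => 1 - ω x) μ :=
    (integrable_const (1 : ℝ)).sub hωint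
  have hg_bd : ∀ x, |g x| ≤ 1 := by
    intro x; rcases hg01 x with h | h <;> rw [h] <;> norm_num
  have hη_bd : ∀ x, |η x| ≤ 1 := by
    intro x; rcases hη01 x with ⟨h0, h1⟩; rw [abs_of_nonneg h0]; exact h1
  have hηint : Integrable (fun x => η x * (1 - ω x)) μ :=
    h1ω.bdd_mul (c := 1) hη_meas.aestronglyMeasurable (Filter.Eventually.of_forall fun x => by simpa using hη_bd x)
  have hgint : Integrable (fun x => g x * (1 - ω x)) μ :=
    h1ω.bdd_mul (c := 1) hg_meas.aestronglyMeasurable (Filter.Eventually.of_forall fun x => by simpa using hg_bd x)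
  have hsmeas : MeasurableSet {x | ω x < 1} := measurableSet_lt hω_meas measurable_const
  have hcompl : {x | ω x < 1}ᶜ = {x | 1 ≤ ω x} := by
    ext x; simp [not_lt]
  -- generic: f nonneg, bounded by 1, satisfying the A-hypothesis ⇒ integral ≤ 0 and
  -- |integral| = -integral
  have key : ∀ f : X → ℝ, Integrable (fun x => f x * (1 - ω x)) μ → (∀ x, 0 ≤ f x) →
      |∫ x in {x | ω x < 1}, f x * (1 - ω x) ∂μ| ≤
        |∫ x in {x | 1 ≤ ω x}, f x * (1 - ω x) ∂μ| →
      (∫ x, f x * (1 - ω x) ∂μ) ≤ 0 := by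
    intro f hfint hf0 hA
    have hsplit : (∫ x in {x | ω x < 1}, f x * (1 - ω x) ∂μ) +
        (∫ x in {x | ω x < 1}ᶜ, f x * (1 - ω x) ∂μ) = ∫ x, f x * (1 - ω x) ∂μ :=
      integral_add_compl hsmeas hfint
    rw [hcompl] at hsplit
    have ha : (∫ x in {x | 1 ≤ ω x}, f x * (1 - ω x) ∂μ) ≤ 0 := by
      apply setIntegral_nonpos (hcompl ▸ hsmeas.compl)
      · intro x hx
        exact mul_nonpos_of_nonneg_of_nonpos (hf0 x) (by simp at hx; linarith)
    have hb : 0 ≤ ∫ x in {x | ω x < 1}, f x * (1 - ω x) ∂μ := by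
      apply setIntegral_nonneg hsmeas
      intro x hx
      exact mul_nonneg (hf0 x) (by simp at hx; linarith)
    rw [abs_of_nonneg hb, abs_of_nonpos ha] at hA
    linarith
  have hηle : (∫ x, η x * (1 - ω x) ∂μ) ≤ 0 :=
    key η hηint (fun x => (hη01 x).1) A1
  have hgle : (∫ x, g x * (1 - ω x) ∂μ) ≤ 0 := by
    refine key g hgint (fun x => ?_) A2
    rcases hg01 x with h | h <;> rw [h] <;> norm_num
  -- rewrite A3
  have hA3 : (∫ x, (η x - g x) * (ω x - 1) ∂μ) =
      (∫ x, g x * (1 - ω x) ∂μ) - ∫ x, η x * (1 - ω x) ∂μ := by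
    rw [← integral_sub hgint hηint]
    congr 1; ext x; ring
  rw [hA3] at A3
  rw [abs_of_nonpos hηle, abs_of_nonpos hgle]
  linarith
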